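/- Let X be a real Hilbert space, Z_N ⊂ X an N-dimensional subspace, ℓ_1,…,ℓ_M ∈ X' continuous linear functionals, ξ > 0, and y ∈ ℝ^M. Then the functional J_ξ(z,η) = ξ‖η‖² + (1/M)Σ_{m=1}^M (ℓ_m(z+η) − y_m)² defined on Z_N × X admits a minimizer, and at any minimizer (z*, η*) the first-order optimality conditions hold: 2ξ(η*, q) + (2/M)Σ_m (ℓ_m(z*+η*) − y_m)ℓ_m(q) = 0 for all q ∈ X, and Σ_m (ℓ_m(z*+η*) − y_m)ℓ_m(p) = 0 for all p ∈ Z_N. -/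

import Mathlib

open RealInnerProductSpace


lemma quad_coeff_zero (L Q : ℝ) (hQ : 0 ≤ Q) (h : ∀ t : ℝ, 0 ≤ t * L + t ^ 2 * Q) : L = 0 := by
  have hQ1 : 0 < Q + 1 := by linarith
  have h1 := h (-(L / (Q + 1)))
  have h2 : -(L / (Q + 1)) * L + (-(L / (Q + 1))) ^ 2 * Q = -(L ^ 2) * (1 / (Q + 1) ^ 2) := by
    field_simp; ring
  rw [h2] at h1
  have h3 : 0 < 1 / (Q + 1) ^ 2 := by positivity
  have h4 : L ^ 2 * (1 / (Q + 1) ^ 2) = 0 :=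
    le_antisymm (by linarith) (mul_nonneg (sq_nonneg L) h3.le)
  have h5 : L ^ 2 = 0 := by
    rcases mul_eq_zero.1 h4 with h | h
    · exact h
    · exact absurd h (ne_of_gt h3)
  exact pow_eq_zero_iff (by norm_num) |>.1 h5

lemma sum_sq_expand {M : ℕ} (a b : Fin M → ℝ) (t : ℝ) :
    ∑ m, (a m + t * b m) ^ 2
      = ∑ m, (a m) ^ 2 + t * (2 * ∑ m, a m * b m) + t ^ 2 * ∑ m, (b m) ^ 2 := by
  simp only [Finset.mul_sum, ← Finset.sum_add_distrib]
  exact Finset.sum_congr rfl fun m _ => by ring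

lemma opt_cond {X : Type*} [NormedAddCommGroup X] [InnerProductSpace ℝ X]
    {M : ℕ} (Z : Submodule ℝ X)
    (ℓ : Fin M → (X →L[ℝ] ℝ)) (y : Fin M → ℝ)
    (ξ : ℝ) (hξ : 0 < ξ) (hM : 0 < M)
    (J : X → X → ℝ)
    (hJ : ∀ z η : X,
      J z η = ξ * ‖η‖ ^ 2 + (1 / (M : ℝ)) * ∑ m : Fin M, (ℓ m (z + η) - y m) ^ 2)
    (zs : X) (hzs : zs ∈ Z) (ηs : X)
    (hmin : ∀ z ∈ Z, ∀ η : X, J zs ηs ≤ J z η) :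
      (∀ q : X,
        2 * ξ * ⟪ηs, q⟫ +
          (2 / (M : ℝ)) * ∑ m : Fin M, (ℓ m (zs + ηs) - y m) * ℓ m q = 0) ∧
      (∀ p ∈ Z, ∑ m : Fin M, (ℓ m (zs + ηs) - y m) * ℓ m p = 0) := by
  have hMpos : (0 : ℝ) < (M : ℝ) := by exact_mod_cast hM
  constructor
  · intro q
    apply quad_coeff_zero _ (ξ * ‖q‖ ^ 2 + (1 / (M : ℝ)) * ∑ m, (ℓ m q) ^ 2)
    · have : (0:ℝ) ≤ ∑ m : Fin M, (ℓ m q) ^ 2 := Finset.sum_nonneg fun m _ => sq_nonneg _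
      positivity
    · intro t
      have key := hmin zs hzs (ηs + t • q)
      rw [hJ, hJ] at key
      have hη : ‖ηs + t • q‖ ^ 2 = ‖ηs‖ ^ 2 + 2 * (t * ⟪ηs, q⟫) + t ^ 2 * ‖q‖ ^ 2 := by
        rw [norm_add_sq_real, real_inner_smul_right, norm_smul]
        rw [mul_pow]
        simp [sq_abs]
      have hsum : ∑ m : Fin M, (ℓ m (zs + (ηs + t • q)) - y m) ^ 2
          = ∑ m : Fin M, ((ℓ m (zs + ηs) - y m) + t * ℓ m q) ^ 2 := by
        refine Finset.sum_congr rfl fun m _ => ?_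
        have : ℓ m (zs + (ηs + t • q)) = ℓ m (zs + ηs) + t * ℓ m q := by
          simp [map_add, map_smul, smul_eq_mul]; ring
        rw [this]; ring
      rw [hη, hsum, sum_sq_expand (fun m => ℓ m (zs + ηs) - y m) (fun m => ℓ m q) t] at key
      set S1 : ℝ := ∑ m : Fin M, (ℓ m (zs + ηs) - y m) ^ 2 with hS1
      set S2 : ℝ := ∑ m : Fin M, (ℓ m (zs + ηs) - y m) * ℓ m q with hS2
      set S3 : ℝ := ∑ m : Fin M, (ℓ m q) ^ 2 with hS3
      have hr : t * (2 * ξ * ⟪ηs, q⟫ + 2 / (M : ℝ) * S2) + t ^ 2 * (ξ * ‖q‖ ^ 2 + 1 / (M : ℝ) * S3)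
          = (ξ * (‖ηs‖ ^ 2 + 2 * (t * ⟪ηs, q⟫) + t ^ 2 * ‖q‖ ^ 2)
              + 1 / (M : ℝ) * (S1 + t * (2 * S2) + t ^ 2 * S3))
            - (ξ * ‖ηs‖ ^ 2 + 1 / (M : ℝ) * S1) := by ring
      rw [hr]
      linarith
  · intro p hp
    have hL : (2 / (M : ℝ)) * ∑ m : Fin M, (ℓ m (zs + ηs) - y m) * ℓ m p = 0 := by
      apply quad_coeff_zero _ ((1 / (M : ℝ)) * ∑ m, (ℓ m p) ^ 2)
      · have : (0:ℝ) ≤ ∑ m : Fin M, (ℓ m p) ^ 2 := Finset.sum_nonneg fun m _ => sq_nonneg _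
        positivity
      · intro t
        have key := hmin (zs + t • p) (Z.add_mem hzs (Z.smul_mem t hp)) ηs
        rw [hJ, hJ] at key
        have hsum : ∑ m : Fin M, (ℓ m (zs + t • p + ηs) - y m) ^ 2
            = ∑ m : Fin M, ((ℓ m (zs + ηs) - y m) + t * ℓ m p) ^ 2 := by
          refine Finset.sum_congr rfl fun m _ => ?_
          have : ℓ m (zs + t • p + ηs) = ℓ m (zs + ηs) + t * ℓ m p := by
            simp [map_add, map_smul, smul_eq_mul]; ring
          rw [this]; ring
        rw [hsum, sum_sq_expand (fun m => ℓ m (zs + ηs) - y m) (fun m => ℓ m p) t] at key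
        set S1 : ℝ := ∑ m : Fin M, (ℓ m (zs + ηs) - y m) ^ 2 with hS1
        set S2 : ℝ := ∑ m : Fin M, (ℓ m (zs + ηs) - y m) * ℓ m p with hS2
        set S3 : ℝ := ∑ m : Fin M, (ℓ m p) ^ 2 with hS3
        have hr : t * (2 / (M : ℝ) * S2) + t ^ 2 * (1 / (M : ℝ) * S3)
            = (ξ * ‖ηs‖ ^ 2 + 1 / (M : ℝ) * (S1 + t * (2 * S2) + t ^ 2 * S3))
              - (ξ * ‖ηs‖ ^ 2 + 1 / (M : ℝ) * S1) := by ring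
        rw [hr]
        linarith
    have h2M : (2 / (M : ℝ)) ≠ 0 := by positivity
    exact (mul_eq_zero.1 hL).resolve_left h2M


lemma coercive_bound {M : ℕ} (c e K : Fin M → ℝ) (he : ∀ m, |e m| ≤ K m) :
    (∑ m, (c m) ^ 2) / 2 - ∑ m, (K m) ^ 2 ≤ ∑ m, (c m + e m) ^ 2 := by
  rw [Finset.sum_div, ← Finset.sum_sub_distrib]
  refine Finset.sum_le_sum fun m _ => ?_
  have habs := abs_le.1 (he m)
  nlinarith [sq_nonneg (c m + 2 * e m)]

set_option maxHeartbeats 1000000 in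
lemma exists_min {X : Type*} [NormedAddCommGroup X] [InnerProductSpace ℝ X] [CompleteSpace X]
    {M : ℕ} (Z : Submodule ℝ X) [FiniteDimensional ℝ Z]
    (ℓ : Fin M → (X →L[ℝ] ℝ)) (y : Fin M → ℝ)
    (ξ : ℝ) (hξ : 0 < ξ) (hM : 0 < M)
    (J : X → X → ℝ)
    (hJ : ∀ z η : X,
      J z η = ξ * ‖η‖ ^ 2 + (1 / (M : ℝ)) * ∑ m : Fin M, (ℓ m (z + η) - y m) ^ 2) :
    ∃ zs ∈ Z, ∃ ηs : X, ∀ z ∈ Z, ∀ η : X, J zs ηs ≤ J z η := by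
  classical
  have hMpos : (0:ℝ) < (M:ℝ) := by exact_mod_cast hM
  set r : Fin M → X := fun m => (InnerProductSpace.toDual ℝ X).symm (ℓ m) with hrdef
  have hrx : ∀ (m : Fin M) (x : X), ⟪r m, x⟫ = ℓ m x := fun m x =>
    InnerProductSpace.toDual_symm_apply
  set W : Submodule ℝ X := Submodule.span ℝ (Set.range r) with hWdef
  haveI : FiniteDimensional ℝ W := FiniteDimensional.span_of_finite ℝ (Set.finite_range r)
  have hproj : ∀ (m : Fin M) (x : X), ℓ m (Submodule.orthogonalProjectionOnto W x : X) = ℓ m x := by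
    intro m x
    have hmem : x - Submodule.orthogonalProjectionOnto W x ∈ Wᗮ := Submodule.sub_starProjection_mem_orthogonal (K := W) x
    have h0 : ⟪r m, x - Submodule.orthogonalProjectionOnto W x⟫ = 0 :=
      (Submodule.mem_orthogonal W _).1 hmem (r m) (Submodule.subset_span ⟨m, rfl⟩)
    rw [inner_sub_right, hrx, hrx] at h0
    linarith
  have hprojnorm : ∀ x : X, ‖(Submodule.orthogonalProjectionOnto W x : X)‖ ≤ ‖x‖ := by
    intro x
    calc ‖(Submodule.orthogonalProjectionOnto W x : X)‖ ≤ ‖Submodule.orthogonalProjectionOnto W‖ * ‖x‖ :=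
          (Submodule.orthogonalProjectionOnto W).le_opNorm x
      _ ≤ 1 * ‖x‖ := mul_le_mul_of_nonneg_right (Submodule.orthogonalProjectionOnto_norm_le W) (norm_nonneg x)
      _ = ‖x‖ := one_mul _
  set A : X →ₗ[ℝ] EuclideanSpace ℝ (Fin M) :=
    (WithLp.linearEquiv 2 ℝ (Fin M → ℝ)).symm.toLinearMap.comp
      (LinearMap.pi fun m => (ℓ m : X →ₗ[ℝ] ℝ)) with hAdef
  have hAapp : ∀ (x : X) (m : Fin M), A x m = ℓ m x := fun x m => rfl
  set AZ : Submodule ℝ (EuclideanSpace ℝ (Fin M)) := Z.map A with hAZdef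
  set c0 : ℝ := (1 / (M:ℝ)) * ∑ m : Fin M, (y m) ^ 2 with hc0
  have hc0nn : 0 ≤ c0 := by
    have : (0:ℝ) ≤ ∑ m : Fin M, (y m) ^ 2 := Finset.sum_nonneg fun m _ => sq_nonneg _
    positivity
  set R1 : ℝ := Real.sqrt (c0 / ξ) with hR1
  have hR1nn : 0 ≤ R1 := Real.sqrt_nonneg _
  set B : ℝ := ∑ m : Fin M, (‖ℓ m‖ * R1 + |y m|) ^ 2 with hB
  have hBnn : 0 ≤ B := Finset.sum_nonneg fun m _ => sq_nonneg _
  set R2 : ℝ := Real.sqrt (2 * ((M:ℝ) * c0 + B)) with hR2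
  set h : ↥AZ × ↥W → ℝ := fun p =>
    ξ * ‖(p.2 : X)‖ ^ 2 +
      (1/(M:ℝ)) * ∑ m : Fin M, ((p.1 : EuclideanSpace ℝ (Fin M)) m + ℓ m (p.2 : X) - y m) ^ 2
    with hh
  have hcont : Continuous h := by
    apply Continuous.add
    · exact continuous_const.mul ((continuous_subtype_val.comp continuous_snd).norm.pow 2)
    · refine continuous_const.mul (continuous_finset_sum _ fun m _ => ?_)
      refine (Continuous.sub (Continuous.add ?_ ?_) continuous_const).pow 2
      · exact (EuclideanSpace.proj m).continuous.comp (continuous_subtype_val.comp continuous_fst)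
      · exact (ℓ m).continuous.comp (continuous_subtype_val.comp continuous_snd)
  set s : Set (↥AZ × ↥W) := Metric.closedBall 0 R2 ×ˢ Metric.closedBall 0 R1 with hsdef
  have hsc : IsCompact s := (isCompact_closedBall _ _).prod (isCompact_closedBall _ _)
  have h00 : ((0 : ↥AZ), (0 : ↥W)) ∈ s := by
    constructor <;> simp [hR1, hR2, Real.sqrt_nonneg]
  obtain ⟨p0, hp0s, hp0⟩ := hsc.exists_isMinOn ⟨_, h00⟩ hcont.continuousOn
  have hh0 : h ((0 : ↥AZ), (0 : ↥W)) = c0 := by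
    simp [hh, hc0]
  have hsumnn : ∀ p : ↥AZ × ↥W,
      (0:ℝ) ≤ ∑ m : Fin M, ((p.1 : EuclideanSpace ℝ (Fin M)) m + ℓ m (p.2 : X) - y m) ^ 2 :=
    fun p => Finset.sum_nonneg fun m _ => sq_nonneg _
  have hglobal : ∀ p : ↥AZ × ↥W, h p0 ≤ h p := by
    intro p
    have hp0le0 : h p0 ≤ c0 := hh0 ▸ hp0 h00
    by_cases h1 : ‖(p.2 : X)‖ ≤ R1
    · by_cases h2 : ‖(p.1 : EuclideanSpace ℝ (Fin M))‖ ≤ R2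
      · refine hp0 ?_
        constructor <;> simp only [Set.mem_setOf_eq, mem_closedBall_zero_iff,
          Submodule.coe_norm] <;> [exact h2; exact h1]
      · push_neg at h2
        have he : ∀ m : Fin M, |ℓ m (p.2 : X) - y m| ≤ ‖ℓ m‖ * R1 + |y m| := by
          intro m
          have hop : |ℓ m (p.2 : X)| ≤ ‖ℓ m‖ * R1 :=
            le_trans ((ℓ m).le_opNorm _) (mul_le_mul_of_nonneg_left h1 (norm_nonneg _))
          calc |ℓ m (p.2 : X) - y m| ≤ |ℓ m (p.2 : X)| + |y m| := abs_sub _ _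
            _ ≤ ‖ℓ m‖ * R1 + |y m| := by linarith
        have hcb := coercive_bound (fun m => (p.1 : EuclideanSpace ℝ (Fin M)) m)
          (fun m => ℓ m (p.2 : X) - y m) (fun m => ‖ℓ m‖ * R1 + |y m|) he
        have hnormsq : ‖(p.1 : EuclideanSpace ℝ (Fin M))‖ ^ 2
            = ∑ m : Fin M, ((p.1 : EuclideanSpace ℝ (Fin M)) m) ^ 2 := by
          rw [EuclideanSpace.norm_eq, Real.sq_sqrt (Finset.sum_nonneg fun m _ => sq_nonneg _)]
          simp [sq_abs]
        have hR2sq : R2 ^ 2 = 2 * ((M:ℝ) * c0 + B) := Real.sq_sqrt (by positivity)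
        have hcsq : 2 * ((M:ℝ) * c0 + B) < ‖(p.1 : EuclideanSpace ℝ (Fin M))‖ ^ 2 := by
          nlinarith [Real.sqrt_nonneg (2 * ((M:ℝ) * c0 + B)), norm_nonneg (p.1 : EuclideanSpace ℝ (Fin M))]
        have hshape : ∑ m : Fin M, ((p.1 : EuclideanSpace ℝ (Fin M)) m + ℓ m (p.2 : X) - y m) ^ 2
            = ∑ m : Fin M, ((p.1 : EuclideanSpace ℝ (Fin M)) m + (ℓ m (p.2 : X) - y m)) ^ 2 := by
          refine Finset.sum_congr rfl fun m _ => ?_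
          ring
        have hbig : (M:ℝ) * c0
            < ∑ m : Fin M, ((p.1 : EuclideanSpace ℝ (Fin M)) m + ℓ m (p.2 : X) - y m) ^ 2 := by
          rw [hshape]
          have : (M:ℝ) * c0 < (∑ m : Fin M, ((p.1 : EuclideanSpace ℝ (Fin M)) m) ^ 2) / 2 - B := by
            rw [← hnormsq]; linarith
          linarith [hcb]
        refine le_of_lt ?_
        calc h p0 ≤ c0 := hp0le0
          _ < (1/(M:ℝ)) * ∑ m : Fin M,
                ((p.1 : EuclideanSpace ℝ (Fin M)) m + ℓ m (p.2 : X) - y m) ^ 2 := by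
              rw [div_mul_eq_mul_div, one_mul, lt_div_iff₀ hMpos]
              linarith [hbig]
          _ ≤ h p := by
              simp only [hh]
              nlinarith [norm_nonneg (p.2 : X), sq_nonneg ‖(p.2 : X)‖, hξ.le,
                mul_nonneg hξ.le (sq_nonneg ‖(p.2 : X)‖)]
    · push_neg at h1
      have hsq : R1 ^ 2 = c0 / ξ := Real.sq_sqrt (by positivity)
      have hξη : c0 < ξ * ‖(p.2 : X)‖ ^ 2 := by
        have h1' : R1 ^ 2 < ‖(p.2 : X)‖ ^ 2 := by nlinarith
        calc c0 = ξ * (c0 / ξ) := by field_simp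
          _ = ξ * R1 ^ 2 := by rw [hsq]
          _ < ξ * ‖(p.2 : X)‖ ^ 2 := by nlinarith
      refine le_of_lt ?_
      calc h p0 ≤ c0 := hp0le0
        _ < ξ * ‖(p.2 : X)‖ ^ 2 := hξη
        _ ≤ h p := by
            have hs := hsumnn p
            have h1M : (0:ℝ) < 1 / (M:ℝ) := by positivity
            simp only [hh]
            nlinarith
  -- extract minimizer
  have hmem : (p0.1 : EuclideanSpace ℝ (Fin M)) ∈ AZ := p0.1.2
  obtain ⟨zs, hzs, hAzs⟩ := Submodule.mem_map.1 hmem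
  refine ⟨zs, hzs, (p0.2 : X), ?_⟩
  intro z hz η
  have hJzs : J zs (p0.2 : X) = h p0 := by
    rw [hJ]
    simp only [hh]
    congr 2
    refine Finset.sum_congr rfl fun m _ => ?_
    have : ℓ m (zs + (p0.2 : X)) = (p0.1 : EuclideanSpace ℝ (Fin M)) m + ℓ m (p0.2 : X) := by
      rw [map_add, ← hAzs]
      rfl
    rw [this]
  have hle : h p0 ≤ h (⟨A z, Submodule.mem_map_of_mem hz⟩, Submodule.orthogonalProjectionOnto W η) :=
    hglobal _
  have hlast : h (⟨A z, Submodule.mem_map_of_mem hz⟩, Submodule.orthogonalProjectionOnto W η) ≤ J z η := by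
    rw [hJ]
    simp only [hh]
    have hnorm : ξ * ‖(Submodule.orthogonalProjectionOnto W η : X)‖ ^ 2 ≤ ξ * ‖η‖ ^ 2 :=
      mul_le_mul_of_nonneg_left (pow_le_pow_left₀ (norm_nonneg _) (hprojnorm η) 2) hξ.le
    have hsum : ∑ m : Fin M, ((A z) m + ℓ m (Submodule.orthogonalProjectionOnto W η : X) - y m) ^ 2
        = ∑ m : Fin M, (ℓ m (z + η) - y m) ^ 2 := by
      refine Finset.sum_congr rfl fun m _ => ?_
      rw [hproj, map_add, hAapp]
    rw [hsum]
    linarith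
  rw [hJzs]
  linarith

/-- the regularized PBDW functional `J_ξ` admits a minimizer over `Z_N × X`, and
any minimizer satisfies the first-order optimality conditions. -/
theorem stmt_8 {X : Type*} [NormedAddCommGroup X] [InnerProductSpace ℝ X] [CompleteSpace X]
    {N M : ℕ} (Z : Submodule ℝ X) [FiniteDimensional ℝ Z]
    (hZ : Module.finrank ℝ Z = N)
    (ℓ : Fin M → (X →L[ℝ] ℝ)) (y : Fin M → ℝ)
    (ξ : ℝ) (hξ : 0 < ξ) (hM : 0 < M)
    (J : X → X → ℝ)
    (hJ : ∀ z η : X,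
      J z η = ξ * ‖η‖ ^ 2 + (1 / (M : ℝ)) * ∑ m : Fin M, (ℓ m (z + η) - y m) ^ 2) :
    (∃ zs ∈ Z, ∃ ηs : X, ∀ z ∈ Z, ∀ η : X, J zs ηs ≤ J z η) ∧
    (∀ zs ∈ Z, ∀ ηs : X, (∀ z ∈ Z, ∀ η : X, J zs ηs ≤ J z η) →
      (∀ q : X,
        2 * ξ * ⟪ηs, q⟫ +
          (2 / (M : ℝ)) * ∑ m : Fin M, (ℓ m (zs + ηs) - y m) * ℓ m q = 0) ∧
      (∀ p ∈ Z, ∑ m : Fin M, (ℓ m (zs + ηs) - y m) * ℓ m p = 0)) := by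
  exact ⟨exists_min Z ℓ y ξ hξ hM J hJ,
    fun zs hzs ηs hmin => opt_cond Z ℓ y ξ hξ hM J hJ zs hzs ηs hmin⟩
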